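/- Let X be a nonempty set, and for i = 1, …, n let s_i : X → ℂ^ℓ and G_i : X → ℂ^{ℓ×ℓ} be functions such that G_i(x) is Hermitian positive definite for every x ∈ X. Define F(x) = ∑_{i=1}^n s_i(x)^H G_i(x)^{-1} s_i(x) and Q(x, y) = ∑_{i=1}^n [2·Re{s_i(x)^H y_i} − y_i^H G_i(x) y_i] for y = (y_1, …, y_n) ∈ (ℂ^ℓ)^n. Then: (i) for every x ∈ X, sup over y ∈ (ℂ^ℓ)^n of Q(x, y) equals F(x), attained uniquely at y_i = G_i(x)^{-1} s_i(x); (ii) a point x* ∈ X maximizes F over X if and only if the pair (x*, y*) with y_i* = G_i(x*)^{-1} s_i(x*) maximizes Q over X × (ℂ^ℓ)^n. -/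

import Mathlib

open Matrix ComplexOrder

lemma key_aux {ℓ : ℕ} {G : Matrix (Fin ℓ) (Fin ℓ) ℂ} (hG : G.PosDef)
    (s y : Fin ℓ → ℂ) :
    2 * (star s ⬝ᵥ y).re - (star y ⬝ᵥ G *ᵥ y).re =
      (star s ⬝ᵥ G⁻¹ *ᵥ s).re -
      (star (y - G⁻¹ *ᵥ s) ⬝ᵥ G *ᵥ (y - G⁻¹ *ᵥ s)).re := by
  have hdet : IsUnit G.det := (Matrix.isUnit_iff_isUnit_det G).mp hG.isUnit
  have hherm : (G⁻¹)ᴴ = G⁻¹ := (hG.isHermitian.inv).eq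
  have h1 : star (G⁻¹ *ᵥ s) ᵥ* G = star s := by
    rw [Matrix.star_mulVec, hherm, Matrix.vecMul_vecMul,
      Matrix.nonsing_inv_mul G hdet, Matrix.vecMul_one]
  have h2 : star (G⁻¹ *ᵥ s) ⬝ᵥ G *ᵥ y = star s ⬝ᵥ y := by
    rw [Matrix.dotProduct_mulVec, h1]
  have h3 : star (G⁻¹ *ᵥ s) ⬝ᵥ G *ᵥ (G⁻¹ *ᵥ s) = star s ⬝ᵥ G⁻¹ *ᵥ s := by
    rw [Matrix.dotProduct_mulVec, h1]
  have h4 : star y ⬝ᵥ G *ᵥ (G⁻¹ *ᵥ s) = star y ⬝ᵥ s := by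
    rw [Matrix.mulVec_mulVec, Matrix.mul_nonsing_inv G hdet, Matrix.one_mulVec]
  have h5 : (star y ⬝ᵥ s).re = (star s ⬝ᵥ y).re := by
    have : star y ⬝ᵥ s = star (star s ⬝ᵥ y) := by
      rw [Matrix.star_dotProduct]
    rw [this, Complex.star_def, Complex.conj_re]
  have expand : star (y - G⁻¹ *ᵥ s) ⬝ᵥ G *ᵥ (y - G⁻¹ *ᵥ s) =
      star y ⬝ᵥ G *ᵥ y - (star s ⬝ᵥ y) - star y ⬝ᵥ s + star s ⬝ᵥ G⁻¹ *ᵥ s := by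
    rw [star_sub, Matrix.mulVec_sub, sub_dotProduct, dotProduct_sub,
      dotProduct_sub, h2, h3, h4]
    ring
  rw [expand]
  simp only [Complex.sub_re, Complex.add_re, h5]
  ring

lemma posdef_re_nonneg {ℓ : ℕ} {G : Matrix (Fin ℓ) (Fin ℓ) ℂ} (hG : G.PosDef)
    (d : Fin ℓ → ℂ) : 0 ≤ (star d ⬝ᵥ G *ᵥ d).re := by
  by_cases hd : d = 0
  · simp [hd]
  · have := hG.dotProduct_mulVec_pos hd
    rw [Complex.lt_def] at this
    exact le_of_lt (by simpa using this.1)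

lemma posdef_re_eq_zero {ℓ : ℕ} {G : Matrix (Fin ℓ) (Fin ℓ) ℂ} (hG : G.PosDef)
    (d : Fin ℓ → ℂ) (h : (star d ⬝ᵥ G *ᵥ d).re = 0) : d = 0 := by
  by_contra hd
  have := hG.dotProduct_mulVec_pos hd
  rw [Complex.lt_def] at this
  have : (0 : ℂ).re < (star d ⬝ᵥ G *ᵥ d).re := this.1
  simp [h] at this

/-- **Quadratic transform equivalence** (Proposition 1).  For `sᵢ : X → ℂ^ℓ`
and Hermitian positive definite `Gᵢ(x)`, with
`F(x) = ∑ᵢ sᵢ(x)ᴴ Gᵢ(x)⁻¹ sᵢ(x)` and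
`Q(x, y) = ∑ᵢ [2 Re{sᵢ(x)ᴴ yᵢ} − yᵢᴴ Gᵢ(x) yᵢ]`:
(i) for each `x`, `Q(x, ·)` is maximized over `y` with value `F(x)`,
uniquely at `yᵢ = Gᵢ(x)⁻¹ sᵢ(x)`; (ii) `x⋆` maximizes `F` over `X` iff
`(x⋆, y⋆)` maximizes `Q` over `X × (ℂ^ℓ)ⁿ`. -/
theorem quadratic_transform_equivalence {ℓ n : ℕ} (X : Type*) [Nonempty X]
    (s : Fin n → X → Fin ℓ → ℂ) (G : Fin n → X → Matrix (Fin ℓ) (Fin ℓ) ℂ)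
    (hG : ∀ i x, (G i x).PosDef)
    (F : X → ℝ)
    (hF : ∀ x, F x = ∑ i, (star (s i x) ⬝ᵥ (G i x)⁻¹ *ᵥ s i x).re)
    (Q : X → (Fin n → Fin ℓ → ℂ) → ℝ)
    (hQ : ∀ x y, Q x y =
      ∑ i, (2 * (star (s i x) ⬝ᵥ y i).re - (star (y i) ⬝ᵥ (G i x) *ᵥ y i).re))
    (Ystar : X → Fin n → Fin ℓ → ℂ)
    (hY : ∀ x i, Ystar x i = (G i x)⁻¹ *ᵥ s i x) :
    (∀ x, (∀ y, Q x y ≤ F x) ∧ Q x (Ystar x) = F x ∧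
      ∀ y, Q x y = F x → y = Ystar x) ∧
    (∀ xstar : X, (∀ x, F x ≤ F xstar) ↔
      (∀ x y, Q x y ≤ Q xstar (Ystar xstar))) := by
  have hterm : ∀ x (y : Fin n → Fin ℓ → ℂ), Q x y =
      F x - ∑ i, (star (y i - Ystar x i) ⬝ᵥ (G i x) *ᵥ (y i - Ystar x i)).re := by
    intro x y
    rw [hQ, hF, ← Finset.sum_sub_distrib]
    refine Finset.sum_congr rfl fun i _ => ?_
    rw [hY]
    exact key_aux (hG i x) _ _
  have part1 : ∀ x, (∀ y, Q x y ≤ F x) ∧ Q x (Ystar x) = F x ∧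
      ∀ y, Q x y = F x → y = Ystar x := by
    intro x
    refine ⟨fun y => ?_, ?_, fun y hy => ?_⟩
    · rw [hterm]
      have : 0 ≤ ∑ i, (star (y i - Ystar x i) ⬝ᵥ (G i x) *ᵥ (y i - Ystar x i)).re :=
        Finset.sum_nonneg fun i _ => posdef_re_nonneg (hG i x) _
      linarith
    · rw [hterm]
      simp
    · rw [hterm] at hy
      have hsum : ∑ i, (star (y i - Ystar x i) ⬝ᵥ (G i x) *ᵥ (y i - Ystar x i)).re = 0 := by
        linarith
      have hzero := (Finset.sum_eq_zero_iff_of_nonneg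
        (fun i _ => posdef_re_nonneg (hG i x) (y i - Ystar x i))).mp hsum
      funext i
      have := posdef_re_eq_zero (hG i x) _ (hzero i (Finset.mem_univ i))
      have : y i - Ystar x i = 0 := this
      exact sub_eq_zero.mp this
  refine ⟨part1, fun xstar => ⟨fun h x y => ?_, fun h x => ?_⟩⟩
  · calc Q x y ≤ F x := (part1 x).1 y
    _ ≤ F xstar := h x
    _ = Q xstar (Ystar xstar) := ((part1 xstar).2.1).symm
  · calc F x = Q x (Ystar x) := ((part1 x).2.1).symm
    _ ≤ Q xstar (Ystar xstar) := h x (Ystar x)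
    _ = F xstar := (part1 xstar).2.1
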